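/- Let d₁, d₂ ≥ 1, let W₁ be a real m × d₁ matrix, b₁ ∈ ℝ^m, W₂ a real d₂ × m matrix, b₂ ∈ ℝ^{d₂}, and let g : ℝ^{d₁} → ℝ^{d₂} be the two-layer ReLU network g(x) = W₂·ReLU(W₁ x + b₁) + b₂ (ReLU applied componentwise). Then for every ε > 0 there exist W₁' (m × d₁), b₁' ∈ ℝ^m, W₂' (d₂ × m), b₂' ∈ ℝ^{d₂} such that the two-layer GeLU network f(x) = W₂'·GeLU(W₁' x + b₁') + b₂' satisfies sup over all x ∈ ℝ^{d₁} of ‖f(x) − g(x)‖_∞ ≤ ε. -/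

import Mathlib

open ProbabilityTheory

/-- The cumulative distribution function of the standard Gaussian measure on ℝ. -/
noncomputable def stdGaussianCDF (x : ℝ) : ℝ := cdf (gaussianReal 0 1) x

/-- The GeLU activation function. -/
noncomputable def gelu (x : ℝ) : ℝ := x * stdGaussianCDF x

open Real MeasureTheory Set

noncomputable def gK : ℝ := (Real.sqrt (2 * Real.pi))⁻¹ * Real.exp (1/2)

lemma gK_pos : 0 < gK := by
  have : 0 < Real.sqrt (2 * Real.pi) := Real.sqrt_pos.mpr (by positivity)
  unfold gK; positivity

lemma stdGaussianCDF_eq (y : ℝ) :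
    stdGaussianCDF y = ∫ t in Iic y, gaussianPDFReal 0 1 t := by
  rw [stdGaussianCDF, cdf_eq_real, measureReal_def, gaussianReal_apply_eq_integral 0 one_ne_zero,
    ENNReal.toReal_ofReal (integral_nonneg fun t => gaussianPDFReal_nonneg 0 1 t)]

lemma pdf_le (t : ℝ) : gaussianPDFReal 0 1 t ≤ gK * Real.exp t := by
  unfold gaussianPDFReal gK
  have h1 : ((1 : NNReal) : ℝ) = 1 := rfl
  rw [h1]
  have h2 : Real.exp (-(t - 0)^2 / (2*1)) ≤ Real.exp (1/2) * Real.exp t := by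
    rw [← Real.exp_add]
    apply Real.exp_le_exp.mpr
    nlinarith [sq_nonneg (t + 1)]
  have h3 : (0:ℝ) ≤ (Real.sqrt (2 * Real.pi * 1))⁻¹ := by positivity
  calc (Real.sqrt (2 * Real.pi * 1))⁻¹ * Real.exp (-(t - 0)^2 / (2*1))
      ≤ (Real.sqrt (2 * Real.pi * 1))⁻¹ * (Real.exp (1/2) * Real.exp t) := by
        exact mul_le_mul_of_nonneg_left h2 h3
    _ = (Real.sqrt (2 * Real.pi))⁻¹ * Real.exp (1/2) * Real.exp t := by
        rw [mul_one]; ring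

lemma cdf_le (y : ℝ) : stdGaussianCDF y ≤ gK * Real.exp y := by
  rw [stdGaussianCDF_eq]
  have h1 : IntegrableOn (gaussianPDFReal 0 1) (Iic y) :=
    (integrable_gaussianPDFReal 0 1).restrict
  have h2 : IntegrableOn (fun t => gK * Real.exp t) (Iic y) :=
    (integrableOn_exp_Iic y).const_mul gK
  calc ∫ t in Iic y, gaussianPDFReal 0 1 t
      ≤ ∫ t in Iic y, gK * Real.exp t :=
        setIntegral_mono_on h1 h2 measurableSet_Iic (fun t _ => pdf_le t)
    _ = gK * Real.exp y := by rw [MeasureTheory.integral_const_mul, integral_exp_Iic]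

lemma gauss_map_neg : (gaussianReal 0 1).map (fun x : ℝ => -x) = gaussianReal 0 1 := by
  have h := gaussianReal_map_const_mul (μ := 0) (v := 1) (-1)
  have h2 : (fun x : ℝ => (-1) * x) = fun x : ℝ => -x := by funext x; ring
  rw [h2] at h
  rw [h]
  congr 1
  · ring
  · ext
    simp

lemma one_sub_cdf_le (y : ℝ) : 1 - stdGaussianCDF y ≤ gK * Real.exp (-y) := by
  have hμ : IsProbabilityMeasure (gaussianReal 0 1) := inferInstance
  have hfin : ∀ s : Set ℝ, gaussianReal 0 1 s ≠ ⊤ := fun s => measure_ne_top _ s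
  have hsplit : gaussianReal 0 1 (Iic y) + gaussianReal 0 1 (Ioi y) = 1 := by
    rw [← measure_union (Iic_disjoint_Ioi le_rfl) measurableSet_Ioi, Iic_union_Ioi,
      measure_univ]
  have hioi : (gaussianReal 0 1 (Ioi y)).toReal = 1 - stdGaussianCDF y := by
    have h := congrArg ENNReal.toReal hsplit
    rw [ENNReal.toReal_add (hfin _) (hfin _)] at h
    simp only [ENNReal.toReal_one] at h
    rw [stdGaussianCDF, cdf_eq_real, measureReal_def]
    linarith
  have hle : gaussianReal 0 1 (Ioi y) ≤ gaussianReal 0 1 (Iic (-y)) := by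
    have h1 : gaussianReal 0 1 (Ioi y) ≤ gaussianReal 0 1 (Ici y) :=
      measure_mono Ioi_subset_Ici_self
    have h2 : gaussianReal 0 1 (Ici y) = gaussianReal 0 1 (Iic (-y)) := by
      conv_lhs => rw [← gauss_map_neg]
      rw [Measure.map_apply measurable_neg measurableSet_Ici]
      congr 1
      ext x
      simp
    rw [← h2]; exact h1
  have hkey : 1 - stdGaussianCDF y ≤ stdGaussianCDF (-y) := by
    rw [← hioi, stdGaussianCDF, cdf_eq_real, measureReal_def]
    exact ENNReal.toReal_mono (hfin _) hle
  exact hkey.trans (cdf_le (-y))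

lemma gelu_aux (y : ℝ) : |y * stdGaussianCDF y - max 0 y| ≤ gK := by
  have hΦ0 : 0 ≤ stdGaussianCDF y := cdf_nonneg (μ := gaussianReal 0 1) y
  have hΦ1 : stdGaussianCDF y ≤ 1 := cdf_le_one (μ := gaussianReal 0 1) y
  rcases le_or_gt y 0 with hy | hy
  · rw [max_eq_left hy, sub_zero, abs_mul, abs_of_nonneg hΦ0]
    have h1 : stdGaussianCDF y ≤ gK * Real.exp y := cdf_le y
    have h2 : |y| * Real.exp y ≤ 1 := by
      rw [abs_of_nonpos hy]
      have := Real.add_one_le_exp (-y)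
      have hexp : Real.exp y * Real.exp (-y) = 1 := by
        rw [← Real.exp_add]; simp
      nlinarith [Real.exp_pos y, Real.exp_pos (-y)]
    calc |y| * stdGaussianCDF y ≤ |y| * (gK * Real.exp y) :=
          mul_le_mul_of_nonneg_left h1 (abs_nonneg y)
      _ = gK * (|y| * Real.exp y) := by ring
      _ ≤ gK * 1 := mul_le_mul_of_nonneg_left h2 gK_pos.le
      _ = gK := mul_one _
  · rw [max_eq_right hy.le]
    have h1 : 1 - stdGaussianCDF y ≤ gK * Real.exp (-y) := one_sub_cdf_le y
    have heq : |y * stdGaussianCDF y - y| = y * (1 - stdGaussianCDF y) := by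
      rw [abs_of_nonpos (by nlinarith)]; ring
    rw [heq]
    have h2 : y * Real.exp (-y) ≤ 1 := by
      have := Real.add_one_le_exp y
      have hexp : Real.exp y * Real.exp (-y) = 1 := by
        rw [← Real.exp_add]; simp
      nlinarith [Real.exp_pos y, Real.exp_pos (-y)]
    calc y * (1 - stdGaussianCDF y) ≤ y * (gK * Real.exp (-y)) :=
          mul_le_mul_of_nonneg_left h1 hy.le
      _ = gK * (y * Real.exp (-y)) := by ring
      _ ≤ gK * 1 := mul_le_mul_of_nonneg_left h2 gK_pos.le
      _ = gK := mul_one _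

/-- Any two-layer ReLU network can be uniformly approximated on all of ℝ^{d₁}
by a two-layer GeLU network of the same architecture; the norm on `Fin d₂ → ℝ`
is the sup (max-coordinate) norm. -/
theorem relu_mlp_approx_by_gelu_mlp (d₁ d₂ m : ℕ) (hd₁ : 1 ≤ d₁) (hd₂ : 1 ≤ d₂)
    (W₁ : Matrix (Fin m) (Fin d₁) ℝ) (b₁ : Fin m → ℝ)
    (W₂ : Matrix (Fin d₂) (Fin m) ℝ) (b₂ : Fin d₂ → ℝ)
    (ε : ℝ) (hε : 0 < ε) :
    ∃ (W₁' : Matrix (Fin m) (Fin d₁) ℝ) (b₁' : Fin m → ℝ)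
      (W₂' : Matrix (Fin d₂) (Fin m) ℝ) (b₂' : Fin d₂ → ℝ),
      ∀ x : Fin d₁ → ℝ,
        ‖(W₂'.mulVec (fun k => gelu ((W₁'.mulVec x + b₁') k)) + b₂') -
          (W₂.mulVec (fun k => max 0 ((W₁.mulVec x + b₁) k)) + b₂)‖ ≤ ε := by
  classical
  set S : ℝ := ∑ i : Fin d₂, ∑ k : Fin m, |W₂ i k| with hS
  have hS0 : 0 ≤ S := Finset.sum_nonneg fun i _ => Finset.sum_nonneg fun k _ => abs_nonneg _
  set B : ℝ := S + 1 with hB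
  have hB0 : (0:ℝ) < B := by linarith
  set c : ℝ := max 1 (B * gK / ε) with hc
  have hc1 : (1:ℝ) ≤ c := le_max_left _ _
  have hc0 : (0:ℝ) < c := lt_of_lt_of_le one_pos hc1
  refine ⟨c • W₁, c • b₁, c⁻¹ • W₂, b₂, fun x => ?_⟩
  rw [pi_norm_le_iff_of_nonneg hε.le]
  intro i
  set z : Fin m → ℝ := fun k => (W₁.mulVec x + b₁) k with hz
  have harg : ∀ k, ((c • W₁).mulVec x + c • b₁) k = c * z k := by
    intro k
    simp [Matrix.smul_mulVec, hz, Pi.add_apply, Pi.smul_apply, smul_eq_mul, mul_add]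
  have hcoord : ((c⁻¹ • W₂).mulVec (fun k => gelu (((c • W₁).mulVec x + c • b₁) k)) + b₂ -
      (W₂.mulVec (fun k => max 0 ((W₁.mulVec x + b₁) k)) + b₂)) i
      = ∑ k, W₂ i k * (c⁻¹ * gelu (c * z k) - max 0 (z k)) := by
    simp only [Pi.sub_apply, Pi.add_apply, Matrix.mulVec, dotProduct,
      Matrix.smul_apply, smul_eq_mul, harg]
    have hzk : ∀ k : Fin m, (∑ j, W₁ k j * x j + b₁ k) = z k := fun k => rfl
    simp only [hzk, mul_sub, Finset.sum_sub_distrib]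
    have he : ∑ k, W₂ i k * (c⁻¹ * gelu (c * z k)) = ∑ k, c⁻¹ * W₂ i k * gelu (c * z k) :=
      Finset.sum_congr rfl fun k _ => by ring
    rw [he]; ring
  rw [Real.norm_eq_abs, hcoord]
  have hterm : ∀ k : Fin m, |c⁻¹ * gelu (c * z k) - max 0 (z k)| ≤ gK / c := by
    intro k
    have hmax : c * max 0 (z k) = max 0 (c * z k) := by
      rw [mul_max_of_nonneg _ _ hc0.le, mul_zero]
    have h1 : c⁻¹ * gelu (c * z k) - max 0 (z k)
        = c⁻¹ * (gelu (c * z k) - max 0 (c * z k)) := by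
      rw [mul_sub, ← hmax]
      field_simp
    rw [h1, abs_mul, abs_of_nonneg (inv_nonneg.mpr hc0.le)]
    have h2 : |gelu (c * z k) - max 0 (c * z k)| ≤ gK := gelu_aux (c * z k)
    calc c⁻¹ * |gelu (c * z k) - max 0 (c * z k)| ≤ c⁻¹ * gK :=
          mul_le_mul_of_nonneg_left h2 (inv_nonneg.mpr hc0.le)
      _ = gK / c := by rw [div_eq_mul_inv, mul_comm]
  have hrow : (∑ k : Fin m, |W₂ i k|) ≤ B := by
    have h1 : (∑ k : Fin m, |W₂ i k|) ≤ S :=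
      Finset.single_le_sum (f := fun i => ∑ k : Fin m, |W₂ i k|)
        (fun j _ => Finset.sum_nonneg fun k _ => abs_nonneg _) (Finset.mem_univ i)
    linarith
  calc |∑ k, W₂ i k * (c⁻¹ * gelu (c * z k) - max 0 (z k))|
      ≤ ∑ k, |W₂ i k * (c⁻¹ * gelu (c * z k) - max 0 (z k))| :=
        Finset.abs_sum_le_sum_abs _ _
    _ ≤ ∑ k, |W₂ i k| * (gK / c) := Finset.sum_le_sum fun k _ => by
        rw [abs_mul]
        exact mul_le_mul_of_nonneg_left (hterm k) (abs_nonneg _)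
    _ = (∑ k : Fin m, |W₂ i k|) * (gK / c) := by rw [Finset.sum_mul]
    _ ≤ B * (gK / c) := by
        apply mul_le_mul_of_nonneg_right hrow
        exact div_nonneg gK_pos.le hc0.le
    _ ≤ ε := by
        rw [mul_div_assoc'] at *
        rw [div_le_iff₀ hc0]
        have h1 : B * gK / ε ≤ c := le_max_right _ _
        calc B * gK = ε * (B * gK / ε) := by field_simp
          _ ≤ ε * c := mul_le_mul_of_nonneg_left h1 hε.le
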